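/- Rényi divergence from a Gibbs measure to the Gaussian adapted to its strong convexity (first ingredient in the proof of Lemma 7.1). Let 𝓛 : ℝ^p → ℝ be differentiable, m-strongly convex, and M-smooth with m ≤ M, with global minimizer θ_opt, and let β > 0. Let P be the probability measure on ℝ^p with density exp(−β𝓛(θ))/Z where Z = ∫_{ℝ^p} exp(−β𝓛(θ)) dθ, and let Q be the probability measure with density (βm/(2π))^{p/2} exp(−(βm/2)‖θ − θ_opt‖²) (the Gaussian N(θ_opt, (βm)^{-1} I_p)). Then for every α > 1, R_α(P, Q) ≤ (pα/(2(α − 1))) · log(M/m). -/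

import Mathlib

open MeasureTheory Real

noncomputable section

/-- ℝ^p as a Euclidean space. -/
abbrev Eu (p : ℕ) := EuclideanSpace ℝ (Fin p)

/-- Rényi divergence of order `α` between two probability densities `pd, qd`
with respect to Lebesgue measure on ℝ^p:
`R_α(P, Q) = (α − 1)⁻¹ log ∫ pd(θ)^α qd(θ)^(1−α) dθ`. -/
def renyiDiv {p : ℕ} (α : ℝ) (pd qd : Eu p → ℝ) : ℝ :=
  (α - 1)⁻¹ * Real.log (∫ θ, pd θ ^ α * qd θ ^ (1 - α))

/-- The density of the Gaussian `N(μ, (βm)⁻¹ I_p)` on ℝ^p. -/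
def gaussDensity (p : ℕ) (βm : ℝ) (μ : Eu p) (θ : Eu p) : ℝ :=
  (βm / (2 * Real.pi)) ^ ((p : ℝ) / 2) * Real.exp (-(βm / 2) * ‖θ - μ‖ ^ 2)

open Filter Topology

/-- Strong convexity lower bound at the minimizer. -/
lemma strong_lb {p : ℕ} (𝓛 : Eu p → ℝ) (m : ℝ)
    (hsc : ConvexOn ℝ Set.univ (fun x => 𝓛 x - m / 2 * ‖x‖ ^ 2))
    (θopt : Eu p) (hopt : ∀ x, 𝓛 θopt ≤ 𝓛 x) (θ : Eu p) :
    𝓛 θopt + m / 2 * ‖θ - θopt‖ ^ 2 ≤ 𝓛 θ := by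
  have key : ∀ t : ℝ, t ∈ Set.Ioc (0:ℝ) 1 →
      𝓛 θopt + m / 2 * (1 - t) * ‖θ - θopt‖ ^ 2 ≤ 𝓛 θ := by
    rintro t ⟨ht0, ht1⟩
    have h := hsc.2 (Set.mem_univ θopt) (Set.mem_univ θ)
      (sub_nonneg.2 ht1) ht0.le (by ring)
    simp only [smul_eq_mul] at h
    have hmin := hopt ((1 - t) • θopt + t • θ)
    have hnorm : ‖(1 - t) • θopt + t • θ‖ ^ 2
        = (1 - t) * ‖θopt‖ ^ 2 + t * ‖θ‖ ^ 2 - t * (1 - t) * ‖θ - θopt‖ ^ 2 := by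
      have h1 := @norm_add_sq_real (Eu p) _ _ ((1 - t) • θopt) (t • θ)
      have h2 := @norm_sub_sq_real (Eu p) _ _ θ θopt
      rw [real_inner_smul_left, real_inner_smul_right, norm_smul, norm_smul] at h1
      rw [Real.norm_eq_abs, Real.norm_eq_abs, abs_of_nonneg (sub_nonneg.2 ht1),
        abs_of_nonneg ht0.le] at h1
      have h3 : (inner ℝ θopt θ : ℝ) = inner ℝ θ θopt := real_inner_comm _ _
      linear_combination h1 + t*(1-t)*h2 + 2*t*(1-t)*h3
    rw [hnorm] at h
    have ht : t * (𝓛 θopt + m / 2 * (1 - t) * ‖θ - θopt‖ ^ 2) ≤ t * 𝓛 θ := by nlinarith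
    exact (mul_le_mul_iff_right₀ ht0).1 ht
  have hseq : Tendsto (fun n : ℕ => 𝓛 θopt + m / 2 * (1 - 1 / (n + 1)) * ‖θ - θopt‖ ^ 2) atTop
      (𝓝 (𝓛 θopt + m / 2 * (1 - 0) * ‖θ - θopt‖ ^ 2)) := by
    refine Tendsto.const_add _ (Tendsto.mul_const _ (Tendsto.const_mul _ ?_))
    exact tendsto_const_nhds.sub tendsto_one_div_add_atTop_nhds_zero_nat
  have hle : ∀ n : ℕ, 𝓛 θopt + m / 2 * (1 - 1 / (n + 1)) * ‖θ - θopt‖ ^ 2 ≤ 𝓛 θ := by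
    intro n
    refine key _ ⟨by positivity, ?_⟩
    rw [div_le_one (by positivity)]
    linarith [Nat.cast_nonneg (α := ℝ) n]
  have := le_of_tendsto hseq (Filter.Eventually.of_forall hle)
  simpa using this

/-- Descent lemma at the minimizer. -/
lemma descent_lem {p : ℕ} (𝓛 : Eu p → ℝ) (g : Eu p → Eu p)
    (hgrad : ∀ x, HasGradientAt 𝓛 (g x) x)
    (M : ℝ) (hM : 0 ≤ M) (hsm : LipschitzWith M.toNNReal g)
    (θopt : Eu p) (hg0 : g θopt = 0) (θ : Eu p) :
    𝓛 θ ≤ 𝓛 θopt + M / 2 * ‖θ - θopt‖ ^ 2 := by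
  set v := θ - θopt with hv
  set c : ℝ → Eu p := fun t => θopt + t • v with hc
  have hcontg : Continuous g := hsm.continuous
  have hcontc : Continuous c := by continuity
  have hder : ∀ t : ℝ, HasDerivAt (fun t => 𝓛 (c t)) ((inner ℝ (g (c t)) v : ℝ)) t := by
    intro t
    have h1 : HasDerivAt c v t := by
      simpa [hc] using ((hasDerivAt_id t).smul_const v).const_add θopt
    have h2 := ((hgrad (c t)).hasFDerivAt.comp_hasDerivAt t h1)
    simpa [Function.comp_def] using h2
  have hcont' : Continuous fun t : ℝ => (inner ℝ (g (c t)) v : ℝ) :=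
    (hcontg.comp hcontc).inner continuous_const
  have hFTC : 𝓛 (c 1) - 𝓛 (c 0) = ∫ t in (0:ℝ)..1, (inner ℝ (g (c t)) v : ℝ) :=
    (intervalIntegral.integral_eq_sub_of_hasDerivAt (fun t _ => hder t)
      (hcont'.intervalIntegrable 0 1)).symm
  have hbound : ∀ t ∈ Set.Icc (0:ℝ) 1, (inner ℝ (g (c t)) v : ℝ) ≤ M * ‖v‖ ^ 2 * t := by
    rintro t ⟨ht0, _⟩
    have h1 : (inner ℝ (g (c t)) v : ℝ) = inner ℝ (g (c t) - g θopt) v := by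
      rw [hg0]; simp
    have h2 : (inner ℝ (g (c t) - g θopt) v : ℝ) ≤ ‖g (c t) - g θopt‖ * ‖v‖ :=
      real_inner_le_norm _ _
    have h3 : ‖g (c t) - g θopt‖ ≤ M * ‖c t - θopt‖ := by
      have := hsm.dist_le_mul (c t) θopt
      rwa [dist_eq_norm, dist_eq_norm, Real.coe_toNNReal _ hM] at this
    have h4 : ‖c t - θopt‖ = t * ‖v‖ := by
      simp [hc, norm_smul, abs_of_nonneg ht0]
    rw [h1]
    calc (inner ℝ (g (c t) - g θopt) v : ℝ) ≤ ‖g (c t) - g θopt‖ * ‖v‖ := h2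
      _ ≤ M * (t * ‖v‖) * ‖v‖ := by
          apply mul_le_mul_of_nonneg_right _ (norm_nonneg _)
          rw [← h4]; exact h3
      _ = M * ‖v‖ ^ 2 * t := by ring
  have hint : (∫ t in (0:ℝ)..1, (inner ℝ (g (c t)) v : ℝ)) ≤
      ∫ t in (0:ℝ)..1, M * ‖v‖ ^ 2 * t := by
    apply intervalIntegral.integral_mono_on zero_le_one
      (hcont'.intervalIntegrable 0 1)
      ((continuous_const.mul continuous_id).intervalIntegrable 0 1)
    exact hbound
  have hval : (∫ t in (0:ℝ)..1, M * ‖v‖ ^ 2 * t) = M / 2 * ‖v‖ ^ 2 := by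
    rw [intervalIntegral.integral_const_mul, integral_id]
    ring
  have hc0 : c 0 = θopt := by simp [hc]
  have hc1 : c 1 = θ := by simp [hc, hv]
  rw [hc0, hc1] at hFTC
  rw [hval] at hint
  linarith [hFTC, hint]

/-- The gradient at a global minimum is zero. -/
lemma grad_zero {p : ℕ} (𝓛 : Eu p → ℝ) (g : Eu p → Eu p)
    (hgrad : ∀ x, HasGradientAt 𝓛 (g x) x)
    (θopt : Eu p) (hopt : ∀ x, 𝓛 θopt ≤ 𝓛 x) : g θopt = 0 := by
  have hmin : IsLocalMin 𝓛 θopt := Filter.Eventually.of_forall hopt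
  have := hmin.hasFDerivAt_eq_zero (hgrad θopt).hasFDerivAt
  exact (LinearIsometryEquiv.map_eq_zero_iff _).1 this

/-- Integrability of a Gaussian on Euclidean space. -/
lemma integrable_gauss {p : ℕ} (b : ℝ) (hb : 0 < b) (μ : Eu p) :
    Integrable (fun θ : Eu p => rexp (-b * ‖θ - μ‖ ^ 2)) := by
  have h := (GaussianFourier.integrable_cexp_neg_mul_sq_norm_add (V := Eu p)
    (b := (b : ℂ)) (by simpa using hb) 0 0).norm
  have h2 : Integrable (fun v : Eu p => rexp (-b * ‖v‖ ^ 2)) := by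
    convert h using 2 with v
    rw [Complex.norm_exp]
    norm_num
    left
    simp [← Complex.ofReal_pow]
  exact h2.comp_sub_right μ

/-- Value of the Gaussian integral on Euclidean space. -/
lemma integral_gauss {p : ℕ} (b : ℝ) (hb : 0 < b) (μ : Eu p) :
    (∫ θ : Eu p, rexp (-b * ‖θ - μ‖ ^ 2)) = (π / b) ^ ((p : ℝ) / 2) := by
  rw [integral_sub_right_eq_self (fun θ : Eu p => rexp (-b * ‖θ‖ ^ 2)) μ]
  rw [GaussianFourier.integral_rexp_neg_mul_sq_norm hb]
  norm_num [finrank_euclideanSpace_fin]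

/-- Rényi divergence from a Gibbs measure to the Gaussian adapted to
its strong convexity. -/
theorem renyi_gibbs_to_gaussian
    {p : ℕ} (hp : 1 ≤ p)
    (𝓛 : Eu p → ℝ) (g : Eu p → Eu p) (hgrad : ∀ x, HasGradientAt 𝓛 (g x) x)
    (m M : ℝ) (hm : 0 < m) (hmM : m ≤ M)
    -- `m`-strong convexity: `𝓛 - (m/2)‖·‖²` is convex
    (hsc : ConvexOn ℝ Set.univ (fun x => 𝓛 x - m / 2 * ‖x‖ ^ 2))
    -- `M`-smoothness: the gradient is `M`-Lipschitz
    (hsm : LipschitzWith M.toNNReal g)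
    (θopt : Eu p) (hopt : ∀ x, 𝓛 θopt ≤ 𝓛 x)
    (β : ℝ) (hβ : 0 < β)
    (α : ℝ) (hα : 1 < α) :
    renyiDiv α
        (fun θ => Real.exp (-β * 𝓛 θ) / (∫ x, Real.exp (-β * 𝓛 x)))
        (gaussDensity p (β * m) θopt) ≤
      (p * α / (2 * (α - 1))) * Real.log (M / m) := by
  have hM : 0 < M := hm.trans_le hmM
  have hπ : 0 < π := Real.pi_pos
  have hg0 : g θopt = 0 := grad_zero 𝓛 g hgrad θopt hopt
  have hL : ∀ θ, 𝓛 θopt + m / 2 * ‖θ - θopt‖ ^ 2 ≤ 𝓛 θ :=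
    strong_lb 𝓛 m hsc θopt hopt
  have hU : ∀ θ, 𝓛 θ ≤ 𝓛 θopt + M / 2 * ‖θ - θopt‖ ^ 2 :=
    descent_lem 𝓛 g hgrad M hM.le hsm θopt hg0
  have hcont : Continuous 𝓛 :=
    continuous_iff_continuousAt.2 fun x => (hgrad x).hasFDerivAt.continuousAt
  set Z := ∫ x, rexp (-β * 𝓛 x) with hZdef
  -- integrability of the Gibbs density numerator
  have hiZ : Integrable (fun x : Eu p => rexp (-β * 𝓛 x)) := by
    apply Integrable.mono'
      ((integrable_gauss (β * m / 2) (by positivity) θopt).const_mul (rexp (-β * 𝓛 θopt)))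
      ((Real.continuous_exp.comp (continuous_const.mul hcont)).aestronglyMeasurable)
    · filter_upwards with θ
      simp only [Function.comp_apply, Pi.mul_apply]
      rw [Real.norm_eq_abs, abs_of_pos (exp_pos _), ← Real.exp_add]
      apply Real.exp_le_exp.2
      have := hL θ
      nlinarith
  -- lower bound on the partition function
  set A := rexp (-β * 𝓛 θopt) * (π / (β * M / 2)) ^ ((p : ℝ) / 2) with hAdef
  have hApos : 0 < A := by positivity
  have hZlb : A ≤ Z := by
    have heq : (∫ θ : Eu p, rexp (-β * 𝓛 θopt) * rexp (-(β * M / 2) * ‖θ - θopt‖ ^ 2)) = A := by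
      rw [integral_const_mul, integral_gauss (β * M / 2) (by positivity) θopt]
    rw [← heq]
    apply integral_mono
      ((integrable_gauss (β * M / 2) (by positivity) θopt).const_mul _) hiZ
    intro θ
    dsimp only
    rw [← Real.exp_add]
    apply Real.exp_le_exp.2
    have := hU θ
    nlinarith
  have hZpos : 0 < Z := hApos.trans_le hZlb
  -- notations
  set c := β * m / (2 * π) with hcdef
  have hc : 0 < c := by positivity
  set C := c ^ ((p : ℝ) / 2) with hCdef
  have hC : 0 < C := by positivity
  set K := Z ^ (-α) * (C ^ (1 - α) * rexp (-(α * (β * 𝓛 θopt)))) with hKdef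
  have hK : 0 < K := by positivity
  -- pointwise bound on the Rényi integrand
  have hpoint : ∀ θ : Eu p,
      (rexp (-β * 𝓛 θ) / Z) ^ α * (C * rexp (-(β * m / 2) * ‖θ - θopt‖ ^ 2)) ^ (1 - α)
        ≤ K * rexp (-(β * m / 2) * ‖θ - θopt‖ ^ 2) := by
    intro θ
    set r := ‖θ - θopt‖ ^ 2 with hrdef
    have hr : 0 ≤ r := by positivity
    have lhs_eq : (rexp (-β * 𝓛 θ) / Z) ^ α * (C * rexp (-(β * m / 2) * r)) ^ (1 - α)
        = Z ^ (-α) * (C ^ (1 - α) *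
          (rexp ((-β * 𝓛 θ) * α) * rexp ((-(β * m / 2) * r) * (1 - α)))) := by
      rw [Real.div_rpow (exp_pos _).le hZpos.le, Real.mul_rpow hC.le (exp_pos _).le,
        ← Real.exp_mul, ← Real.exp_mul, Real.rpow_neg hZpos.le]
      field_simp
    rw [lhs_eq]
    have hexp : rexp ((-β * 𝓛 θ) * α) * rexp ((-(β * m / 2) * r) * (1 - α))
        ≤ rexp (-(α * (β * 𝓛 θopt))) * rexp (-(β * m / 2) * r) := by
      rw [← Real.exp_add, ← Real.exp_add]
      apply Real.exp_le_exp.2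
      have h1 := hL θ
      rw [← hrdef] at h1
      nlinarith [mul_le_mul_of_nonneg_left h1 (le_of_lt (mul_pos (lt_trans one_pos hα) hβ))]
    calc Z ^ (-α) * (C ^ (1 - α) *
          (rexp ((-β * 𝓛 θ) * α) * rexp ((-(β * m / 2) * r) * (1 - α))))
        ≤ Z ^ (-α) * (C ^ (1 - α) *
          (rexp (-(α * (β * 𝓛 θopt))) * rexp (-(β * m / 2) * r))) := by
          apply mul_le_mul_of_nonneg_left _ (Real.rpow_nonneg hZpos.le _)
          exact mul_le_mul_of_nonneg_left hexp (Real.rpow_nonneg hC.le _)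
      _ = K * rexp (-(β * m / 2) * r) := by rw [hKdef]; ring
  -- the integral bound
  have hIle : (∫ θ, (rexp (-β * 𝓛 θ) / Z) ^ α *
        (C * rexp (-(β * m / 2) * ‖θ - θopt‖ ^ 2)) ^ (1 - α))
      ≤ K * (π / (β * m / 2)) ^ ((p : ℝ) / 2) := by
    have := integral_mono_of_nonneg
      (f := fun θ : Eu p => (rexp (-β * 𝓛 θ) / Z) ^ α *
        (C * rexp (-(β * m / 2) * ‖θ - θopt‖ ^ 2)) ^ (1 - α))
      (g := fun θ : Eu p => K * rexp (-(β * m / 2) * ‖θ - θopt‖ ^ 2))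
      (Filter.Eventually.of_forall fun θ => by positivity)
      ((integrable_gauss (β * m / 2) (by positivity) θopt).const_mul K)
      (Filter.Eventually.of_forall hpoint)
    calc _ ≤ ∫ θ : Eu p, K * rexp (-(β * m / 2) * ‖θ - θopt‖ ^ 2) := this
      _ = K * (π / (β * m / 2)) ^ ((p : ℝ) / 2) := by
          rw [integral_const_mul, integral_gauss (β * m / 2) (by positivity) θopt]
  -- bound the constant
  have hKle : K * (π / (β * m / 2)) ^ ((p : ℝ) / 2) ≤ (M / m) ^ ((p : ℝ) / 2 * α) := by
    set q := (p : ℝ) / 2 with hq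
    set a := π / (β * M / 2) with hadef
    have ha : 0 < a := by positivity
    have hd : π / (β * m / 2) = c⁻¹ := by
      rw [hcdef]; field_simp
    have hdC : (π / (β * m / 2)) ^ q = C⁻¹ := by
      rw [hd, Real.inv_rpow hc.le, hCdef]
    have hZa : Z ^ (-α) ≤ A ^ (-α) :=
      Real.rpow_le_rpow_of_nonpos hApos hZlb (by linarith)
    have hstep : K * (π / (β * m / 2)) ^ q
        ≤ A ^ (-α) * (C ^ (1 - α) * rexp (-(α * (β * 𝓛 θopt)))) * C⁻¹ := by
      rw [hdC, hKdef]
      have h0 : (0:ℝ) ≤ C ^ (1 - α) * rexp (-(α * (β * 𝓛 θopt))) * C⁻¹ := by positivity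
      calc Z ^ (-α) * (C ^ (1-α) * rexp (-(α * (β * 𝓛 θopt)))) * C⁻¹
          = Z ^ (-α) * (C ^ (1-α) * rexp (-(α * (β * 𝓛 θopt))) * C⁻¹) := by ring
        _ ≤ A ^ (-α) * (C ^ (1-α) * rexp (-(α * (β * 𝓛 θopt))) * C⁻¹) :=
            mul_le_mul_of_nonneg_right hZa h0
        _ = A ^ (-α) * (C ^ (1-α) * rexp (-(α * (β * 𝓛 θopt)))) * C⁻¹ := by ring
    refine hstep.trans_eq ?_
    have hEq1 : A ^ (-α) = rexp ((-β * 𝓛 θopt) * (-α)) * (a ^ q) ^ (-α) := by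
      rw [hAdef, Real.mul_rpow (exp_pos _).le (Real.rpow_nonneg ha.le _), ← Real.exp_mul]
    have hexp1 : rexp ((-β * 𝓛 θopt) * (-α)) * rexp (-(α * (β * 𝓛 θopt))) = 1 := by
      rw [← Real.exp_add, show (-β * 𝓛 θopt) * (-α) + -(α * (β * 𝓛 θopt)) = 0 by ring,
        Real.exp_zero]
    have hCC : C ^ (1 - α) * C⁻¹ = C ^ (-α) := by
      rw [← Real.rpow_neg_one C, ← Real.rpow_add hC, show (1 - α) + (-1:ℝ) = -α by ring]
    have hac : a * c = m / M := by
      rw [hadef, hcdef]; field_simp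
    calc A ^ (-α) * (C ^ (1 - α) * rexp (-(α * (β * 𝓛 θopt)))) * C⁻¹
        = (rexp ((-β * 𝓛 θopt) * (-α)) * rexp (-(α * (β * 𝓛 θopt)))) *
          ((a ^ q) ^ (-α) * (C ^ (1 - α) * C⁻¹)) := by rw [hEq1]; ring
      _ = (a ^ q) ^ (-α) * C ^ (-α) := by rw [hexp1, hCC]; ring
      _ = (a ^ q * c ^ q) ^ (-α) := by
          rw [Real.mul_rpow (Real.rpow_nonneg ha.le _) (Real.rpow_nonneg hc.le _), hCdef]
      _ = ((a * c) ^ q) ^ (-α) := by rw [← Real.mul_rpow ha.le hc.le]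
      _ = ((m / M) ^ q) ^ (-α) := by rw [hac]
      _ = (m / M) ^ (q * (-α)) := by
          rw [← Real.rpow_mul (div_nonneg hm.le hM.le)]
      _ = (M / m) ^ (q * α) := by
          rw [show q * (-α) = -(q * α) by ring, Real.rpow_neg (div_nonneg hm.le hM.le),
            ← Real.inv_rpow (div_nonneg hm.le hM.le), inv_div]
  -- conclusion
  have hfinal : (∫ θ, (rexp (-β * 𝓛 θ) / Z) ^ α *
      (C * rexp (-(β * m / 2) * ‖θ - θopt‖ ^ 2)) ^ (1 - α)) ≤ (M / m) ^ ((p : ℝ) / 2 * α) :=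
    hIle.trans hKle
  have hInn : (0:ℝ) ≤ ∫ θ, (rexp (-β * 𝓛 θ) / Z) ^ α *
      (C * rexp (-(β * m / 2) * ‖θ - θopt‖ ^ 2)) ^ (1 - α) :=
    integral_nonneg fun θ => by positivity
  have hα1 : (0:ℝ) < α - 1 := by linarith
  have hlogMm : 0 ≤ Real.log (M / m) := Real.log_nonneg ((one_le_div hm).2 hmM)
  have hB : Real.log ((M / m) ^ ((p : ℝ) / 2 * α)) = ((p : ℝ) / 2 * α) * Real.log (M / m) :=
    Real.log_rpow (by positivity) _
  have hlogI : Real.log (∫ θ, (rexp (-β * 𝓛 θ) / Z) ^ α *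
      (C * rexp (-(β * m / 2) * ‖θ - θopt‖ ^ 2)) ^ (1 - α))
      ≤ ((p : ℝ) / 2 * α) * Real.log (M / m) := by
    rcases hInn.eq_or_lt with h | h
    · rw [← h, Real.log_zero]; positivity
    · rw [← hB]; exact Real.log_le_log h hfinal
  simp only [renyiDiv, gaussDensity]
  rw [← hcdef, ← hCdef]
  calc (α - 1)⁻¹ * Real.log (∫ θ, (rexp (-β * 𝓛 θ) / Z) ^ α *
        (C * rexp (-(β * m / 2) * ‖θ - θopt‖ ^ 2)) ^ (1 - α))
      ≤ (α - 1)⁻¹ * (((p : ℝ) / 2 * α) * Real.log (M / m)) :=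
        mul_le_mul_of_nonneg_left hlogI (by positivity)
    _ = (p * α / (2 * (α - 1))) * Real.log (M / m) := by
        have hne : (α - 1) ≠ 0 := ne_of_gt hα1
        field_simp


end
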